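/- Let φ(ξ,η,σ) = ⟨ξ⟩ + ⟨ξ-η⟩ - ⟨η-σ⟩ - ⟨σ⟩ on (ℝ²)³. If |2σ - η| ≥ ρ > 0 then |∂_σφ(ξ,η,σ)| = |(σ-η)/⟨σ-η⟩ + σ/⟨σ⟩| ≥ cρ/⟨|σ-η| + |σ|⟩³ for some absolute constant c > 0. -/

import Mathlib

noncomputable def jap2 (x : EuclideanSpace ℝ (Fin 2)) : ℝ := Real.sqrt (1 + ‖x‖ ^ 2)

noncomputable def japR (r : ℝ) : ℝ := Real.sqrt (1 + r ^ 2)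

lemma jap2_sq (x : EuclideanSpace ℝ (Fin 2)) : (jap2 x) ^ 2 = 1 + ‖x‖ ^ 2 := by
  rw [jap2, Real.sq_sqrt]; positivity

lemma jap2_ge_one (x : EuclideanSpace ℝ (Fin 2)) : 1 ≤ jap2 x := by
  have h := Real.sq_sqrt (show (0:ℝ) ≤ 1 + ‖x‖ ^ 2 by positivity)
  have h2 := Real.sqrt_nonneg (1 + ‖x‖ ^ 2)
  rw [jap2]; nlinarith [sq_nonneg ‖x‖]

lemma japR_sq (r : ℝ) : (japR r) ^ 2 = 1 + r ^ 2 := by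
  rw [japR, Real.sq_sqrt]; positivity

lemma japR_ge_one (r : ℝ) : 1 ≤ japR r := by
  have h := Real.sq_sqrt (show (0:ℝ) ≤ 1 + r ^ 2 by positivity)
  have h2 := Real.sqrt_nonneg (1 + r ^ 2)
  rw [japR]; nlinarith [sq_nonneg r]

lemma alg (p q s a b M : ℝ) (hp : 0 ≤ p) (hq : 0 ≤ q)
    (ha2 : a ^ 2 = 1 + p ^ 2) (hb2 : b ^ 2 = 1 + q ^ 2) (hM2 : M ^ 2 = 1 + (p + q) ^ 2)
    (ha1 : 1 ≤ a) (hb1 : 1 ≤ b) (hM1 : 1 ≤ M) (haM : a ≤ M) (hbM : b ≤ M)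
    (hs : s ≤ p * q) (hs3 : -(p * q) ≤ s) :
    p ^ 2 + q ^ 2 - 2 * s ≤ M ^ 2 * (b ^ 2 * p ^ 2 + a ^ 2 * q ^ 2 - 2 * (a * b) * s) := by
  have e : b ^ 2 * p ^ 2 - a ^ 2 * q ^ 2 = p ^ 2 - q ^ 2 := by rw [ha2, hb2]; ring
  have h6 : (b * p - a * q) ^ 2 * (b * p + a * q) ^ 2 = (p - q) ^ 2 * (p + q) ^ 2 :=
    calc (b * p - a * q) ^ 2 * (b * p + a * q) ^ 2
        = (b ^ 2 * p ^ 2 - a ^ 2 * q ^ 2) ^ 2 := by ring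
      _ = (p ^ 2 - q ^ 2) ^ 2 := by rw [e]
      _ = (p - q) ^ 2 * (p + q) ^ 2 := by ring
  have hsum : b * p + a * q ≤ M * (p + q) := by nlinarith
  have h5 : (b * p + a * q) ^ 2 ≤ M ^ 2 * (p + q) ^ 2 := by
    have := pow_le_pow_left₀ (by positivity) hsum 2
    nlinarith [this]
  rcases eq_or_lt_of_le (add_nonneg hp hq) with h | h
  · have hp0 : p = 0 := by nlinarith
    have hq0 : q = 0 := by nlinarith
    have hs0 : s = 0 := by rw [hp0, hq0] at hs hs3; simp at hs hs3; linarith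
    rw [hp0, hq0, hs0]; nlinarith
  · have hpq2 : 0 < (p + q) ^ 2 := by positivity
    have h7 : (p - q) ^ 2 * (p + q) ^ 2 ≤ (M ^ 2 * (b * p - a * q) ^ 2) * (p + q) ^ 2 :=
      calc (p - q) ^ 2 * (p + q) ^ 2 = (b * p - a * q) ^ 2 * (b * p + a * q) ^ 2 := h6.symm
        _ ≤ (b * p - a * q) ^ 2 * (M ^ 2 * (p + q) ^ 2) :=
            mul_le_mul_of_nonneg_left h5 (sq_nonneg _)
        _ = (M ^ 2 * (b * p - a * q) ^ 2) * (p + q) ^ 2 := by ring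
    have hkey : (p - q) ^ 2 ≤ M ^ 2 * (b * p - a * q) ^ 2 :=
      le_of_mul_le_mul_right h7 hpq2
    have hab : 1 ≤ a * b := by
      have := mul_le_mul ha1 hb1 zero_le_one (le_trans zero_le_one ha1)
      linarith
    have hMsq : 1 ≤ M ^ 2 := by
      rw [hM2]; linarith [sq_nonneg (p + q)]
    have habM : 1 ≤ a * b * M ^ 2 := by
      have := mul_le_mul hab hMsq zero_le_one (by linarith)
      linarith
    have hprod : 0 ≤ (a * b * M ^ 2 - 1) * (p * q - s) :=
      mul_nonneg (by linarith) (by linarith)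
    have expand : M ^ 2 * (b ^ 2 * p ^ 2 + a ^ 2 * q ^ 2 - 2 * (a * b) * s)
        - (p ^ 2 + q ^ 2 - 2 * s)
        = (M ^ 2 * (b * p - a * q) ^ 2 - (p - q) ^ 2)
          + 2 * ((a * b * M ^ 2 - 1) * (p * q - s)) := by ring
    linarith [hkey, hprod, expand]

lemma key (x y : EuclideanSpace ℝ (Fin 2)) :
    ‖(jap2 x)⁻¹ • x - (jap2 y)⁻¹ • y‖ ≥ ‖x - y‖ / japR (‖x‖ + ‖y‖) ^ 3 := by
  have hp : 0 ≤ ‖x‖ := norm_nonneg x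
  have hq : 0 ≤ ‖y‖ := norm_nonneg y
  have ha2 := jap2_sq x
  have hb2 := jap2_sq y
  have hM2 := japR_sq (‖x‖ + ‖y‖)
  have ha1 := jap2_ge_one x
  have hb1 := jap2_ge_one y
  have hM1 := japR_ge_one (‖x‖ + ‖y‖)
  have ha0 : 0 < jap2 x := lt_of_lt_of_le one_pos ha1
  have hb0 : 0 < jap2 y := lt_of_lt_of_le one_pos hb1
  have hM0 : 0 < japR (‖x‖ + ‖y‖) := lt_of_lt_of_le one_pos hM1
  have haM : jap2 x ≤ japR (‖x‖ + ‖y‖) := by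
    rw [jap2, japR]; exact Real.sqrt_le_sqrt (by nlinarith)
  have hbM : jap2 y ≤ japR (‖x‖ + ‖y‖) := by
    rw [jap2, japR]; exact Real.sqrt_le_sqrt (by nlinarith)
  have hs : (inner ℝ x y) ≤ ‖x‖ * ‖y‖ := real_inner_le_norm x y
  have hs3 : -(‖x‖ * ‖y‖) ≤ (inner ℝ x y) :=
    neg_le_of_abs_le (abs_real_inner_le_norm x y)
  set a := jap2 x
  set b := jap2 y
  set M := japR (‖x‖ + ‖y‖)
  have hnsq : ‖b • x - a • y‖ ^ 2
      = b ^ 2 * ‖x‖ ^ 2 + a ^ 2 * ‖y‖ ^ 2 - 2 * (a * b) * (inner ℝ x y) := by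
    rw [norm_sub_sq_real, norm_smul, norm_smul, real_inner_smul_left, real_inner_smul_right,
      Real.norm_eq_abs, Real.norm_eq_abs, abs_of_pos ha0, abs_of_pos hb0]
    ring
  have hxy : ‖x - y‖ ^ 2 = ‖x‖ ^ 2 + ‖y‖ ^ 2 - 2 * (inner ℝ x y) := by
    rw [norm_sub_sq_real]; ring
  have hineq := alg ‖x‖ ‖y‖ (inner ℝ x y) a b M hp hq ha2 hb2 hM2 ha1 hb1 hM1 haM hbM hs hs3
  have hn1 : ‖x - y‖ / M ≤ ‖b • x - a • y‖ := by
    have hsq : (‖x - y‖ / M) ^ 2 ≤ ‖b • x - a • y‖ ^ 2 := by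
      rw [div_pow, hnsq, hxy, div_le_iff₀ (by positivity)]
      nlinarith [hineq]
    have h1 : 0 ≤ ‖x - y‖ / M := by positivity
    nlinarith [norm_nonneg (b • x - a • y), hsq]
  have hrw : (a⁻¹ • x - b⁻¹ • y) = (a * b)⁻¹ • (b • x - a • y) := by
    rw [smul_sub, smul_smul, smul_smul]
    congr 2
    · field_simp
    · field_simp
  rw [hrw, norm_smul, Real.norm_eq_abs, abs_of_pos (by positivity : (0:ℝ) < (a * b)⁻¹)]
  have habM2 : a * b ≤ M ^ 2 := by nlinarith
  have hinv : (M ^ 2)⁻¹ ≤ (a * b)⁻¹ := inv_anti₀ (by positivity) habM2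
  have heq : (M ^ 2)⁻¹ * (‖x - y‖ / M) = ‖x - y‖ / M ^ 3 := by
    rw [div_eq_mul_inv, div_eq_mul_inv, show (M ^ 3 : ℝ) = M ^ 2 * M by ring, mul_inv]
    ring
  calc ‖x - y‖ / M ^ 3 = (M ^ 2)⁻¹ * (‖x - y‖ / M) := heq.symm
    _ ≤ (a * b)⁻¹ * ‖b • x - a • y‖ :=
        mul_le_mul hinv hn1 (by positivity) (by positivity)

/-- If `|2σ - η| ≥ ρ > 0` then
`|(σ-η)/⟨σ-η⟩ + σ/⟨σ⟩| ≥ c ρ / ⟨|σ-η|+|σ|⟩³`. -/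
theorem stmt16 : ∃ c : ℝ, 0 < c ∧
    ∀ (η σ : EuclideanSpace ℝ (Fin 2)) (ρ : ℝ), 0 < ρ → ρ ≤ ‖(2 : ℝ) • σ - η‖ →
      ‖(jap2 (σ - η))⁻¹ • (σ - η) + (jap2 σ)⁻¹ • σ‖ ≥
        c * ρ / japR (‖σ - η‖ + ‖σ‖) ^ 3 := by
  refine ⟨1, one_pos, fun η σ ρ hρ hρ2 => ?_⟩
  have h := key σ (η - σ)
  have h1 : σ - (η - σ) = (2:ℝ) • σ - η := by
    rw [two_smul]; abel
  have h2 : σ - η = -(η - σ) := by abel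
  have h3 : jap2 (σ - η) = jap2 (η - σ) := by
    rw [h2, jap2, jap2, norm_neg]
  have h4 : (jap2 (σ - η))⁻¹ • (σ - η) + (jap2 σ)⁻¹ • σ
      = (jap2 σ)⁻¹ • σ - (jap2 (η - σ))⁻¹ • (η - σ) := by
    rw [h3, h2, smul_neg]; abel
  have h5 : ‖σ - η‖ = ‖η - σ‖ := by rw [h2, norm_neg]
  rw [h4, h5]
  rw [h1] at h
  have hden : 0 < japR (‖σ‖ + ‖η - σ‖) ^ 3 := by
    have := japR_ge_one (‖σ‖ + ‖η - σ‖); positivity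
  have hcomm : ‖η - σ‖ + ‖σ‖ = ‖σ‖ + ‖η - σ‖ := by ring
  rw [hcomm]
  calc 1 * ρ / japR (‖σ‖ + ‖η - σ‖) ^ 3
      ≤ ‖(2:ℝ) • σ - η‖ / japR (‖σ‖ + ‖η - σ‖) ^ 3 := by
        have h1ρ : (1:ℝ) * ρ ≤ ‖(2:ℝ) • σ - η‖ := by linarith
        gcongr
    _ ≤ ‖(jap2 σ)⁻¹ • σ - (jap2 (η - σ))⁻¹ • (η - σ)‖ := h
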